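/- Let X = {0, e₁, ..., e_n} ⊆ ℝⁿ (the origin together with the standard basis vectors) with the Euclidean metric and counting measure μ. Then the doubling condition μ(B(x,2r)) ≤ (n+1)·μ(B(x,r)) holds for all x ∈ X, r > 0, and the Hardy-Littlewood maximal operator on X satisfies ‖M‖_{L¹(X)→L^{1,∞}(X)} ≥ (n+1)/2. -/

import Mathlib

open MeasureTheory Metric

/-- The Hardy–Littlewood maximal function of `f` with respect to the measure `μ`,
using closed balls. -/
noncomputable def HLmax {X : Type*} [MetricSpace X] [MeasurableSpace X]
    (μ : Measure X) (f : X → ℝ) (x : X) : ℝ :=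
  ⨆ r : {r : ℝ // 0 < r}, (μ (closedBall x r)).toReal⁻¹ * ∫ y in closedBall x r, |f y| ∂μ

/-- The finite subset `X = {0, e₁, …, e_n}` of Euclidean space, as a subtype. -/
def StarSet (n : ℕ) : Type :=
  {x : EuclideanSpace ℝ (Fin n) // x = 0 ∨ ∃ i : Fin n, x = EuclideanSpace.single i 1}

noncomputable instance (n : ℕ) : MetricSpace (StarSet n) :=
  Subtype.metricSpace

instance (n : ℕ) : MeasurableSpace (StarSet n) := ⊤

instance (n : ℕ) : MeasurableSingletonClass (StarSet n) := ⟨fun _ => trivial⟩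

lemma StarSet.measurable (n : ℕ) (s : Set (StarSet n)) : MeasurableSet s := trivial

lemma single_ne_zero'' (n : ℕ) (i : Fin n) : (EuclideanSpace.single i (1:ℝ)) ≠ 0 := by
  intro h
  have := congrArg (fun v => v i) h
  simp [EuclideanSpace.single_apply] at this

lemma single_inj' (n : ℕ) (i j : Fin n)
    (h : EuclideanSpace.single i (1:ℝ) = EuclideanSpace.single j 1) : i = j := by
  by_contra hij
  have := congrArg (fun v => v i) h
  simp [EuclideanSpace.single_apply, hij] at this

/-- The origin as an element of `StarSet n`. -/
noncomputable def zpt (n : ℕ) : StarSet n := ⟨0, Or.inl rfl⟩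

/-- The basis vector `eᵢ` as an element of `StarSet n`. -/
noncomputable def ept (n : ℕ) (i : Fin n) : StarSet n :=
  ⟨EuclideanSpace.single i 1, Or.inr ⟨i, rfl⟩⟩

lemma zpt_ne_ept (n : ℕ) (i : Fin n) : zpt n ≠ ept n i := by
  intro h
  exact single_ne_zero'' n i (congrArg Subtype.val h).symm

noncomputable def starEquiv (n : ℕ) : Option (Fin n) ≃ StarSet n :=
  Equiv.ofBijective (fun o => o.elim (zpt n) (ept n)) (by
    constructor
    · intro a b hab
      cases a with
      | none => cases b with
        | none => rfl
        | some j => exact absurd (congrArg Subtype.val hab).symm (single_ne_zero'' n j)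
      | some i => cases b with
        | none => exact absurd (congrArg Subtype.val hab) (single_ne_zero'' n i)
        | some j => exact congrArg some (single_inj' n i j (congrArg Subtype.val hab))
    · rintro ⟨x, h | ⟨i, hi⟩⟩
      · exact ⟨none, Subtype.ext h.symm⟩
      · exact ⟨some i, Subtype.ext hi.symm⟩)

noncomputable instance (n : ℕ) : Fintype (StarSet n) := Fintype.ofEquiv _ (starEquiv n)

lemma card_starSet (n : ℕ) : Fintype.card (StarSet n) = n + 1 := by
  rw [← Fintype.card_congr (starEquiv n)]
  simp

lemma count_univ_star (n : ℕ) :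
    Measure.count (Set.univ : Set (StarSet n)) = (n : ENNReal) + 1 := by
  rw [Measure.count_univ, ENat.card_eq_coe_fintype_card, card_starSet]
  push_cast
  rfl

lemma count_le_star (n : ℕ) (s : Set (StarSet n)) :
    Measure.count s ≤ (n : ENNReal) + 1 :=
  (count_univ_star n) ▸ measure_mono (Set.subset_univ s)

lemma count_ne_top_star (n : ℕ) (s : Set (StarSet n)) :
    Measure.count s ≠ ⊤ :=
  ne_top_of_le_ne_top (by simp) (count_le_star n s)

lemma one_le_count_star (n : ℕ) {s : Set (StarSet n)} {x : StarSet n} (hx : x ∈ s) :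
    1 ≤ Measure.count s := by
  calc (1 : ENNReal) = Measure.count ({x} : Set (StarSet n)) := (Measure.count_singleton x).symm
    _ ≤ Measure.count s := measure_mono (Set.singleton_subset_iff.2 hx)

lemma dist_ept_zpt (n : ℕ) (i : Fin n) : dist (ept n i) (zpt n) = 1 := by
  erw [Subtype.dist_eq]
  show dist (EuclideanSpace.single i (1:ℝ)) 0 = 1
  rw [dist_zero_right, EuclideanSpace.norm_single]
  norm_num

lemma one_lt_dist_ept (n : ℕ) (i j : Fin n) (hij : i ≠ j) :
    1 < dist (ept n i) (ept n j) := by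
  erw [Subtype.dist_eq]
  show 1 < dist (EuclideanSpace.single i (1:ℝ)) (EuclideanSpace.single j 1)
  have h : dist (EuclideanSpace.single i (1:ℝ)) (EuclideanSpace.single j 1) = Real.sqrt 2 := by
    rw [EuclideanSpace.dist_eq]
    congr 1
    have : ∀ k : Fin n, dist (EuclideanSpace.single i (1:ℝ) k) (EuclideanSpace.single j 1 k) ^ 2
        = (if k = i then (1:ℝ) else 0) + (if k = j then 1 else 0) := by
      intro k
      rcases eq_or_ne k i with rfl | hki <;> rcases eq_or_ne k j with rfl | hkj <;>
        simp_all [EuclideanSpace.single_apply, Real.dist_eq]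
    simp only [this, Finset.sum_add_distrib, Finset.sum_ite_eq', Finset.mem_univ, if_true]
    norm_num
  rw [h]
  nlinarith [Real.sq_sqrt (by norm_num : (2:ℝ) ≥ 0), Real.sqrt_nonneg 2]

/-- The closed ball of radius 1/2 around the origin is just the origin. -/
lemma ball_zpt (n : ℕ) : closedBall (zpt n) (1/2) = {zpt n} := by
  ext y
  simp only [mem_closedBall, Set.mem_singleton_iff]
  constructor
  · intro hy
    rcases y.2 with h | ⟨i, hi⟩
    · exact Subtype.ext h
    · exfalso
      have hy' : y = ept n i := Subtype.ext hi
      rw [hy', dist_ept_zpt] at hy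
      norm_num at hy
  · rintro rfl; simp

lemma ball_ept_subset (n : ℕ) (i : Fin n) :
    closedBall (ept n i) 1 ⊆ {zpt n, ept n i} := by
  intro y hy
  simp only [mem_closedBall] at hy
  rcases y.2 with h | ⟨j, hj⟩
  · exact Or.inl (Subtype.ext h)
  · have hy' : y = ept n j := Subtype.ext hj
    rcases eq_or_ne j i with rfl | hji
    · exact Or.inr hy'
    · exfalso
      rw [hy'] at hy
      exact absurd hy (not_le.2 (one_lt_dist_ept n j i hji))

lemma zpt_mem_ball_ept (n : ℕ) (i : Fin n) : zpt n ∈ closedBall (ept n i) 1 := by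
  simp only [mem_closedBall, dist_comm]
  rw [dist_ept_zpt]

section main

variable (n : ℕ)

/-- The test function: indicator of the origin. -/
noncomputable def fz : StarSet n → ℝ := Set.indicator {zpt n} (fun _ => (1:ℝ))

lemma fz_abs (x : StarSet n) : |fz n x| = Set.indicator {zpt n} (fun _ => (1:ℝ)) x := by
  unfold fz
  rcases eq_or_ne x (zpt n) with rfl | hx
  · simp
  · simp [hx]

lemma integral_fz_ball (x : StarSet n) (r : ℝ) :
    ∫ y in closedBall x r, |fz n y| ∂(Measure.count : Measure (StarSet n))
      = (Measure.count ({zpt n} ∩ closedBall x r)).toReal := by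
  simp only [fz_abs]
  rw [MeasureTheory.integral_indicator_const _ (StarSet.measurable n _), measureReal_def,
    Measure.restrict_apply (StarSet.measurable n _)]
  simp

lemma hlmax_term_le_one (x : StarSet n) (r : ℝ) (hr : 0 < r) :
    (Measure.count (closedBall x r)).toReal⁻¹ *
      ∫ y in closedBall x r, |fz n y| ∂(Measure.count : Measure (StarSet n)) ≤ 1 := by
  rw [integral_fz_ball]
  have h1 : (Measure.count (closedBall x r)).toReal⁻¹ ≤ 1 := by
    rw [inv_le_one_iff₀]
    right
    calc (1:ℝ) = (1 : ENNReal).toReal := by simp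
      _ ≤ _ := ENNReal.toReal_mono (count_ne_top_star n _)
        (one_le_count_star n (mem_closedBall_self hr.le))
  have h2 : (Measure.count ({zpt n} ∩ closedBall x r)).toReal ≤ 1 := by
    calc _ ≤ (Measure.count ({zpt n} : Set (StarSet n))).toReal :=
          ENNReal.toReal_mono (count_ne_top_star n _) (measure_mono Set.inter_subset_left)
      _ = 1 := by simp
  have h3 : (0:ℝ) ≤ (Measure.count ({zpt n} ∩ closedBall x r)).toReal := ENNReal.toReal_nonneg
  have h4 : (0:ℝ) ≤ (Measure.count (closedBall x r)).toReal⁻¹ := by positivity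
  calc _ ≤ 1 * (1:ℝ) := mul_le_mul h1 h2 h3 zero_le_one
    _ = 1 := mul_one 1

lemma hlmax_ge_half (x : StarSet n) : 1/2 ≤ HLmax Measure.count (fz n) x := by
  have hbdd : BddAbove (Set.range fun r : {r : ℝ // 0 < r} =>
      (Measure.count (closedBall x r)).toReal⁻¹ *
        ∫ y in closedBall x (r:ℝ), |fz n y| ∂(Measure.count : Measure (StarSet n))) := by
    refine ⟨1, ?_⟩
    rintro _ ⟨r, rfl⟩
    exact hlmax_term_le_one n x r r.2
  rcases x.2 with h | ⟨i, hi⟩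
  · -- x = origin : use r = 1/2
    have hx : x = zpt n := Subtype.ext h
    subst hx
    refine le_ciSup_of_le hbdd ⟨1/2, by norm_num⟩ ?_
    rw [integral_fz_ball, ball_zpt]
    have : ({zpt n} : Set (StarSet n)) ∩ {zpt n} = {zpt n} := Set.inter_self _
    rw [this, Measure.count_singleton]
    simp
    norm_num
  · -- x = eᵢ : use r = 1
    have hx : x = ept n i := Subtype.ext hi
    subst hx
    refine le_ciSup_of_le hbdd ⟨1, one_pos⟩ ?_
    rw [integral_fz_ball]
    have hz : ({zpt n} : Set (StarSet n)) ∩ closedBall (ept n i) 1 = {zpt n} := by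
      rw [Set.inter_eq_left, Set.singleton_subset_iff]
      exact zpt_mem_ball_ept n i
    rw [hz, Measure.count_singleton]
    have hub : Measure.count (closedBall (ept n i) 1) ≤ 2 := by
      calc Measure.count (closedBall (ept n i) 1)
          ≤ Measure.count ({zpt n, ept n i} : Set (StarSet n)) :=
            measure_mono (ball_ept_subset n i)
        _ ≤ Measure.count ({zpt n} : Set (StarSet n))
            + Measure.count ({ept n i} : Set (StarSet n)) := by
            rw [Set.insert_eq]
            exact measure_union_le _ _
        _ = 2 := by simp [Measure.count_singleton]; norm_num
    have hlb : (1:ENNReal) ≤ Measure.count (closedBall (ept n i) 1) :=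
      one_le_count_star n (mem_closedBall_self zero_le_one)
    have h2 : (Measure.count (closedBall (ept n i) 1)).toReal ≤ 2 := by
      calc _ ≤ ((2:ENNReal)).toReal := ENNReal.toReal_mono (by simp) hub
        _ = 2 := by simp
    have h1 : (1:ℝ) ≤ (Measure.count (closedBall (ept n i) 1)).toReal := by
      calc (1:ℝ) = (1:ENNReal).toReal := by simp
        _ ≤ _ := ENNReal.toReal_mono (count_ne_top_star n _) hlb
    rw [ENNReal.toReal_one, mul_one, le_inv_comm₀ (by norm_num) (by linarith)]
    norm_num
    linarith

end main

lemma integral_fz_total (n : ℕ) :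
    ∫ x, |fz n x| ∂(Measure.count : Measure (StarSet n)) = 1 := by
  classical
  rw [integral_fintype (Integrable.of_finite)]
  simp only [fz_abs, Measure.count_singleton, ENNReal.toReal_one, one_smul]
  rw [Finset.sum_eq_single (zpt n)]
  · simp
  · intro b _ hb
    simp [Set.indicator_apply, hb]
  · simp

theorem stmt4 (n : ℕ) (hn : 1 ≤ n) :
    (∀ x : StarSet n, ∀ r : ℝ, 0 < r →
      Measure.count (closedBall x (2 * r)) ≤ ((n : ENNReal) + 1) * Measure.count (closedBall x r)) ∧
    (∀ C : ℝ,
      (∀ f : StarSet n → ℝ, ∀ lam : ℝ, 0 < lam →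
        lam * (Measure.count {x | lam < HLmax Measure.count f x}).toReal ≤
          C * ∫ x, |f x| ∂(Measure.count : Measure (StarSet n))) →
      ((n : ℝ) + 1) / 2 ≤ C) := by
  constructor
  · intro x r hr
    calc Measure.count (closedBall x (2 * r)) ≤ (n : ENNReal) + 1 := count_le_star n _
      _ = ((n : ENNReal) + 1) * 1 := (mul_one _).symm
      _ ≤ ((n : ENNReal) + 1) * Measure.count (closedBall x r) :=
          mul_le_mul_right (one_le_count_star n (mem_closedBall_self hr.le)) _
  · intro C h
    by_contra hC
    push_neg at hC
    set N : ℝ := (n : ℝ) + 1 with hN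
    have hN0 : (0:ℝ) < N := by positivity
    have hm : max C 0 < N / 2 := max_lt hC (by positivity)
    have ha0 : (0:ℝ) ≤ max C 0 / N := div_nonneg (le_max_right C 0) hN0.le
    set lam : ℝ := (max C 0 / N + 1/2) / 2 with hlam
    have halam : max C 0 / N < 1/2 := by
      rw [div_lt_iff₀ hN0]
      linarith
    have hlam_lt : lam < 1/2 := by rw [hlam]; linarith
    have hlam_pos : 0 < lam := by rw [hlam]; linarith
    have key := h (fz n) lam hlam_pos
    have hset : {x | lam < HLmax Measure.count (fz n) x} = Set.univ := by
      ext x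
      simp only [Set.mem_setOf_eq, Set.mem_univ, iff_true]
      exact lt_of_lt_of_le hlam_lt (hlmax_ge_half n x)
    rw [hset, count_univ_star, integral_fz_total] at key
    have htr : ((n : ENNReal) + 1).toReal = N := by
      rw [hN]
      simp [ENNReal.toReal_add]
    rw [htr, mul_one] at key
    have h5 : max C 0 / N < lam := by rw [hlam]; linarith
    have h6 : max C 0 < lam * N := (div_lt_iff₀ hN0).1 h5
    have h7 : C < lam * N := lt_of_le_of_lt (le_max_left _ _) h6
    linarith
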